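/- (Reconstruction error for non-bandlimited signals.) Let B and D be two orthogonal projectors on ℝ^N with ‖B D^c‖₂ < 1, where D^c := I − D and B^c := I − B. Let ψ_1, …, ψ_N be an orthonormal basis of ℝ^N of eigenvectors of B·D·B with B·D·B ψ_i = σ_i² ψ_i. For an arbitrary signal f ∈ ℝ^N, let f̃ := Σ_{i : σ_i² ≠ 0} (1/σ_i²) ⟨Df, ψ_i⟩ ψ_i be its reconstruction from the samples Df. Then the squared reconstruction error decomposes as ‖f − f̃‖² = ‖B^c f‖² + Σ_{i : σ_i² ≠ 0} (1/σ_i⁴) |⟨D B^c f, ψ_i⟩|², i.e., the sum of the out-of-band energy of f and the aliasing error induced in band by the out-of-band components. -/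

import Mathlib

open Matrix

/-- The spectral norm of a real `N × N` matrix: the operator norm of the induced
linear map on `ℝ^N` with the Euclidean norm. -/
noncomputable def matSpectralNorm {N : ℕ} (M : Matrix (Fin N) (Fin N) ℝ) : ℝ :=
  ‖Matrix.toEuclideanCLM (𝕜 := ℝ) M‖

/-- The squared Euclidean norm of a vector in `ℝ^N`. -/
def sqNorm {N : ℕ} (v : Fin N → ℝ) : ℝ := v ⬝ᵥ v

lemma aux_fixed_zero {N : ℕ} (M : Matrix (Fin N) (Fin N) ℝ)
    (h : matSpectralNorm M < 1) (x : Fin N → ℝ) (hx : M.mulVec x = x) : x = 0 := by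
  set x' : EuclideanSpace ℝ (Fin N) := (WithLp.equiv 2 (Fin N → ℝ)).symm x with hx'
  have h1 : Matrix.toEuclideanCLM (𝕜 := ℝ) M x' = x' := by
    rw [hx', WithLp.equiv_symm_apply, Matrix.toEuclideanCLM_toLp]
    simp [Matrix.toLin'_apply, hx]
  have h2 : ‖x'‖ ≤ matSpectralNorm M * ‖x'‖ := by
    conv_lhs => rw [← h1]
    exact (Matrix.toEuclideanCLM (𝕜 := ℝ) M).le_opNorm x'
  have h3 : ‖x'‖ = 0 := by nlinarith [norm_nonneg x']
  have h4 : x' = 0 := norm_eq_zero.mp h3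
  have := congrArg (WithLp.equiv 2 (Fin N → ℝ)) h4
  rw [hx'] at this
  simpa using this

lemma aux_symdot {N : ℕ} (M : Matrix (Fin N) (Fin N) ℝ) (hM : Mᵀ = M)
    (v w : Fin N → ℝ) : M.mulVec v ⬝ᵥ w = v ⬝ᵥ M.mulVec w := by
  have := Matrix.dotProduct_mulVec v M w
  rw [← Matrix.mulVec_transpose, hM] at this
  exact this.symm

/-- **Reconstruction error for non-bandlimited signals.**
Let `B` and `D` be orthogonal projectors on `ℝ^N` with `‖B D^c‖₂ < 1`, where
`D^c := I − D`, `B^c := I − B`, and let `ψ 1, …, ψ N` be an orthonormal basis of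
eigenvectors of `B·D·B` with `B·D·B ψ i = σ² i • ψ i`. For an arbitrary signal `f`, let
`f̃ := Σ_{i : σ² i ≠ 0} (1/σ² i) ⟨Df, ψ i⟩ ψ i` be its reconstruction from the samples
`Df`. Then the squared reconstruction error decomposes as
`‖f − f̃‖² = ‖B^c f‖² + Σ_{i : σ² i ≠ 0} (1/σ⁴ i) |⟨D B^c f, ψ i⟩|²`:
the out-of-band energy of `f` plus the aliasing error induced in band by the out-of-band
components. -/
theorem reconstruction_error_decomposition
    {N : ℕ} (B D : Matrix (Fin N) (Fin N) ℝ)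
    (hBsym : B.transpose = B) (hDsym : D.transpose = D)
    (hBidem : B * B = B) (hDidem : D * D = D)
    (hnorm : matSpectralNorm (B * (1 - D)) < 1)
    (ψ : Fin N → (Fin N → ℝ)) (σsq : Fin N → ℝ)
    (horth : ∀ i j, ψ i ⬝ᵥ ψ j = if i = j then (1 : ℝ) else 0)
    (heig : ∀ i, (B * D * B).mulVec (ψ i) = σsq i • ψ i)
    (f : Fin N → ℝ)
    (ftilde : Fin N → ℝ)
    (hftilde : ftilde = ∑ i ∈ Finset.univ.filter (fun i => σsq i ≠ 0),
        ((D.mulVec f ⬝ᵥ ψ i) / σsq i) • ψ i) :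
    sqNorm (f - ftilde)
      = sqNorm ((1 - B).mulVec f) +
        ∑ i ∈ Finset.univ.filter (fun i => σsq i ≠ 0),
          (D.mulVec ((1 - B).mulVec f) ⬝ᵥ ψ i) ^ 2 / (σsq i) ^ 2 := by
  classical
  -- eigenvectors with nonzero eigenvalue are fixed by B
  have hBBDB : B * (B * D * B) = B * D * B := by
    rw [show B * (B * D * B) = B * B * D * B by noncomm_ring, hBidem]
  have hBψ : ∀ i, σsq i ≠ 0 → B.mulVec (ψ i) = ψ i := by
    intro i hi
    have h2 : σsq i • ψ i = σsq i • B.mulVec (ψ i) := by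
      calc σsq i • ψ i = (B * D * B).mulVec (ψ i) := (heig i).symm
        _ = (B * (B * D * B)).mulVec (ψ i) := by rw [hBBDB]
        _ = B.mulVec ((B * D * B).mulVec (ψ i)) := by rw [← Matrix.mulVec_mulVec]
        _ = B.mulVec (σsq i • ψ i) := by rw [heig i]
        _ = σsq i • B.mulVec (ψ i) := by rw [Matrix.mulVec_smul]
    exact (smul_right_injective _ hi h2).symm
  -- eigenvectors with zero eigenvalue are killed by B
  have hBψ0 : ∀ i, σsq i = 0 → B.mulVec (ψ i) = 0 := by
    intro i hi
    set x := B.mulVec (ψ i) with hxdef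
    have hDx : D.mulVec x = 0 := by
      have hdd : D.mulVec x ⬝ᵥ D.mulVec x = 0 := by
        calc D.mulVec x ⬝ᵥ D.mulVec x = x ⬝ᵥ D.mulVec (D.mulVec x) := by
              rw [aux_symdot D hDsym]
          _ = x ⬝ᵥ (D * D).mulVec x := by rw [Matrix.mulVec_mulVec]
          _ = x ⬝ᵥ D.mulVec x := by rw [hDidem]
          _ = B.mulVec (ψ i) ⬝ᵥ D.mulVec x := rfl
          _ = ψ i ⬝ᵥ B.mulVec (D.mulVec x) := by rw [aux_symdot B hBsym]
          _ = ψ i ⬝ᵥ (B * D * B).mulVec (ψ i) := by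
              rw [Matrix.mulVec_mulVec, hxdef, Matrix.mulVec_mulVec, Matrix.mul_assoc]
          _ = ψ i ⬝ᵥ (σsq i • ψ i) := by rw [heig i]
          _ = 0 := by rw [hi]; simp
      exact (dotProduct_self_eq_zero).mp hdd
    have hfix : (B * (1 - D)).mulVec x = x := by
      rw [← Matrix.mulVec_mulVec, Matrix.sub_mulVec, Matrix.one_mulVec, hDx, sub_zero,
        hxdef, Matrix.mulVec_mulVec, hBidem]
    exact aux_fixed_zero _ hnorm x hfix
  -- completeness of the orthonormal system
  set Q : Matrix (Fin N) (Fin N) ℝ := Matrix.of (fun i j => ψ i j) with hQ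
  have hQQt : Q * Qᵀ = 1 := by
    ext i j
    have := horth i j
    simpa [hQ, Matrix.mul_apply, Matrix.one_apply, dotProduct] using this
  have hQtQ : Qᵀ * Q = 1 := mul_eq_one_comm.mp hQQt
  have hcomplete : ∀ a b : Fin N, (∑ i, ψ i a * ψ i b) = if a = b then (1:ℝ) else 0 := by
    intro a b
    have := congrFun (congrFun hQtQ a) b
    simpa [hQ, Matrix.mul_apply, Matrix.one_apply] using this
  -- Parseval
  have hparseval : ∀ v : Fin N → ℝ, sqNorm v = ∑ i, (v ⬝ᵥ ψ i) ^ 2 := by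
    intro v
    have key : ∀ i, (v ⬝ᵥ ψ i) ^ 2 = ∑ a, ∑ b, (v a * v b) * (ψ i a * ψ i b) := by
      intro i
      rw [sq, dotProduct, Finset.sum_mul_sum]
      exact Finset.sum_congr rfl fun a _ => Finset.sum_congr rfl fun b _ => by ring
    have h1 : ∑ i, (v ⬝ᵥ ψ i) ^ 2
        = ∑ a, ∑ b, (v a * v b) * ∑ i, ψ i a * ψ i b := by
      calc ∑ i, (v ⬝ᵥ ψ i) ^ 2
          = ∑ i, ∑ a, ∑ b, (v a * v b) * (ψ i a * ψ i b) :=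
            Finset.sum_congr rfl fun i _ => key i
        _ = ∑ a, ∑ i, ∑ b, (v a * v b) * (ψ i a * ψ i b) := Finset.sum_comm
        _ = ∑ a, ∑ b, ∑ i, (v a * v b) * (ψ i a * ψ i b) :=
            Finset.sum_congr rfl fun a _ => Finset.sum_comm
        _ = ∑ a, ∑ b, (v a * v b) * ∑ i, ψ i a * ψ i b := by
            refine Finset.sum_congr rfl fun a _ => Finset.sum_congr rfl fun b _ => ?_
            rw [Finset.mul_sum]
    rw [h1]
    simp only [hcomplete, mul_ite, mul_one, mul_zero]
    simp [sqNorm, dotProduct]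
  -- set up notation
  set S := Finset.univ.filter (fun i => σsq i ≠ 0) with hS
  set Sc := Finset.univ.filter (fun i => ¬ σsq i ≠ 0) with hSc
  set e := D.mulVec ((1 - B).mulVec f) with he
  -- coefficients of ftilde
  have hft : ∀ j, ftilde ⬝ᵥ ψ j
      = if σsq j ≠ 0 then (D.mulVec f ⬝ᵥ ψ j) / σsq j else 0 := by
    intro j
    rw [hftilde]
    have hlin : (∑ i ∈ S, ((D.mulVec f ⬝ᵥ ψ i) / σsq i) • ψ i) ⬝ᵥ ψ j
        = ∑ i ∈ S, ((D.mulVec f ⬝ᵥ ψ i) / σsq i) * (ψ i ⬝ᵥ ψ j) := by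
      simp only [dotProduct, Finset.sum_apply, Pi.smul_apply, smul_eq_mul,
        Finset.sum_mul]
      rw [Finset.sum_comm]
      simp [Finset.mul_sum, mul_assoc]
    rw [hlin]
    simp only [horth, mul_ite, mul_one, mul_zero]
    rw [Finset.sum_ite_eq']
    simp [hS]
  -- samples of f in terms of in-band and out-of-band parts
  have hDf : ∀ j, σsq j ≠ 0 → D.mulVec f ⬝ᵥ ψ j = σsq j * (f ⬝ᵥ ψ j) + e ⬝ᵥ ψ j := by
    intro j hj
    have hsplit : D.mulVec f = D.mulVec (B.mulVec f) + e := by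
      rw [he, Matrix.sub_mulVec, Matrix.one_mulVec, Matrix.mulVec_sub]
      abel
    rw [hsplit, add_dotProduct]
    congr 1
    calc D.mulVec (B.mulVec f) ⬝ᵥ ψ j
        = B.mulVec f ⬝ᵥ D.mulVec (ψ j) := aux_symdot D hDsym _ _
      _ = f ⬝ᵥ B.mulVec (D.mulVec (ψ j)) := aux_symdot B hBsym _ _
      _ = f ⬝ᵥ (B * D).mulVec (ψ j) := by rw [Matrix.mulVec_mulVec]
      _ = f ⬝ᵥ (B * D).mulVec (B.mulVec (ψ j)) := by rw [hBψ j hj]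
      _ = f ⬝ᵥ (B * D * B).mulVec (ψ j) := by rw [Matrix.mulVec_mulVec]
      _ = f ⬝ᵥ (σsq j • ψ j) := by rw [heig j]
      _ = σsq j * (f ⬝ᵥ ψ j) := by simp [dotProduct_smul]
  -- coefficients of the error
  have hcoef : ∀ j, (f - ftilde) ⬝ᵥ ψ j
      = if σsq j ≠ 0 then -((e ⬝ᵥ ψ j) / σsq j) else f ⬝ᵥ ψ j := by
    intro j
    rw [sub_dotProduct, hft j]
    by_cases hj : σsq j ≠ 0
    · rw [if_pos hj, if_pos hj, hDf j hj]
      field_simp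
      ring
    · rw [if_neg hj, if_neg hj, sub_zero]
  -- coefficients of the out-of-band part
  have hBc : ∀ j, (1 - B).mulVec f ⬝ᵥ ψ j = if σsq j ≠ 0 then 0 else f ⬝ᵥ ψ j := by
    intro j
    have hsym : (1 - B)ᵀ = 1 - B := by
      rw [Matrix.transpose_sub, Matrix.transpose_one, hBsym]
    rw [aux_symdot _ hsym, Matrix.sub_mulVec, Matrix.one_mulVec]
    by_cases hj : σsq j ≠ 0
    · rw [if_pos hj, hBψ j hj]
      simp
    · rw [if_neg hj, hBψ0 j (not_not.mp hj)]
      simp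
  -- assemble
  have hA : sqNorm (f - ftilde)
      = (∑ j ∈ S, (e ⬝ᵥ ψ j) ^ 2 / (σsq j) ^ 2) + ∑ j ∈ Sc, (f ⬝ᵥ ψ j) ^ 2 := by
    rw [hparseval (f - ftilde),
      ← Finset.sum_filter_add_sum_filter_not Finset.univ (fun j => σsq j ≠ 0)]
    congr 1
    · refine Finset.sum_congr rfl fun j hj => ?_
      have hj' : σsq j ≠ 0 := (Finset.mem_filter.mp hj).2
      rw [hcoef j, if_pos hj', neg_sq, div_pow]
    · refine Finset.sum_congr rfl fun j hj => ?_
      have hj' : ¬ σsq j ≠ 0 := (Finset.mem_filter.mp hj).2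
      rw [hcoef j, if_neg hj']
  have hB : sqNorm ((1 - B).mulVec f) = ∑ j ∈ Sc, (f ⬝ᵥ ψ j) ^ 2 := by
    rw [hparseval ((1 - B).mulVec f),
      ← Finset.sum_filter_add_sum_filter_not Finset.univ (fun j => σsq j ≠ 0)]
    have h0 : ∑ j ∈ S, ((1 - B).mulVec f ⬝ᵥ ψ j) ^ 2 = 0 := by
      refine Finset.sum_eq_zero fun j hj => ?_
      have hj' : σsq j ≠ 0 := (Finset.mem_filter.mp hj).2
      rw [hBc j, if_pos hj']
      ring
    rw [h0, zero_add]
    refine Finset.sum_congr rfl fun j hj => ?_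
    have hj' : ¬ σsq j ≠ 0 := (Finset.mem_filter.mp hj).2
    rw [hBc j, if_neg hj']
  rw [hA, hB, add_comm]
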